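/- Two-term recursion for the complementary kernels (equation (3.12)): for every α ∈ (0,1), every partition 0 = t_0 < ⋯ < t_N = T, and every 2 ≤ n ≤ N, one has P^{n,n−1}_α = P^{n,n}_α · (1 − K^{n,n−1}_{1−α}/K^{n,n}_{1−α}) / μ_n^α, where μ_n = Δt_n/Δt_{n−1}. -/

import Mathlib

open Finset

/-- The kernel `k_β(s) = s^(β-1)/Γ(β)`. -/
noncomputable def kker (β s : ℝ) : ℝ := s ^ (β - 1) / Real.Gamma β

/-- The discrete L1 kernels `K^{n,j}_{1-α}`. -/
noncomputable def Kd (α : ℝ) (t : ℕ → ℝ) (n j : ℕ) : ℝ :=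
  (kker (2 - α) (t n - t (j - 1)) - kker (2 - α) (t n - t j)) / (t j - t (j - 1))

/-- The complementary discrete kernels `P^{n,i}_α`, defined by downward recursion. -/
noncomputable def Pd (α : ℝ) (t : ℕ → ℝ) (n i : ℕ) : ℝ :=
  if i = n then 1 / Kd α t n n
  else (1 / Kd α t i i) *
    ∑ j ∈ (Finset.Ioc i n).attach,
      Pd α t n j.1 * (Kd α t j.1 (i + 1) - Kd α t j.1 i)
termination_by n - i
decreasing_by
  have h := Finset.mem_Ioc.mp j.2
  omega


lemma Kd_diag (α : ℝ) (t : ℕ → ℝ) (m : ℕ) (hα0 : 0 < α) (hα1 : α < 1)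
    (hd : 0 < t m - t (m - 1)) :
    Kd α t m m = (t m - t (m - 1)) ^ (-α) / Real.Gamma (2 - α) := by
  have hne : t m - t (m - 1) ≠ 0 := ne_of_gt hd
  have hΓ : (0:ℝ) < Real.Gamma (2 - α) := Real.Gamma_pos_of_pos (by linarith)
  unfold Kd kker
  rw [sub_self, Real.zero_rpow (by linarith : (2:ℝ) - α - 1 ≠ 0), zero_div, sub_zero]
  have key : (t m - t (m - 1)) ^ (2 - α - 1) = (t m - t (m - 1)) ^ (-α) * (t m - t (m - 1)) := by
    rw [← Real.rpow_add_one hne (-α)]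
    congr 1
    ring
  rw [key]
  generalize (t m - t (m - 1)) ^ (-α) = z
  field_simp

/-- Two-term recursion for the complementary kernels (equation (3.12)):
`P^{n,n-1}_α = P^{n,n}_α (1 - K^{n,n-1}_{1-α}/K^{n,n}_{1-α}) / μ_n^α`
with `μ_n = Δt_n/Δt_{n-1}`, for every `2 ≤ n ≤ N`. -/
theorem complementary_kernel_two_term_recursion
    (α T : ℝ) (N : ℕ) (t : ℕ → ℝ)
    (hα0 : 0 < α) (hα1 : α < 1) (hT : 0 < T)
    (ht0 : t 0 = 0) (htN : t N = T)
    (hmono : ∀ j, j < N → t j < t (j + 1)) :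
    ∀ n, 2 ≤ n → n ≤ N →
      Pd α t n (n - 1)
        = Pd α t n n * (1 - Kd α t n (n - 1) / Kd α t n n) /
            ((t n - t (n - 1)) / (t (n - 1) - t (n - 2))) ^ α := by
  intro n hn2 hnN
  have hΓ : 0 < Real.Gamma (2 - α) := Real.Gamma_pos_of_pos (by linarith)
  have hd1 : 0 < t n - t (n - 1) := by
    have h := hmono (n - 1) (by omega)
    rw [show n - 1 + 1 = n from by omega] at h
    linarith
  have hd2 : 0 < t (n - 1) - t (n - 2) := by
    have h := hmono (n - 2) (by omega)
    rw [show n - 2 + 1 = n - 1 from by omega] at h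
    linarith
  have hK1 : Kd α t n n = (t n - t (n - 1)) ^ (-α) / Real.Gamma (2 - α) :=
    Kd_diag α t n hα0 hα1 hd1
  have hK2 : Kd α t (n - 1) (n - 1) = (t (n - 1) - t (n - 2)) ^ (-α) / Real.Gamma (2 - α) := by
    have := Kd_diag α t (n - 1) hα0 hα1 (by rw [show n - 1 - 1 = n - 2 from by omega]; exact hd2)
    rwa [show n - 1 - 1 = n - 2 from by omega] at this
  rw [Pd, if_neg (by omega : ¬ n - 1 = n), Pd, if_pos rfl]
  rw [Finset.sum_attach (Finset.Ioc (n - 1) n)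
    (fun j => Pd α t n j * (Kd α t j (n - 1 + 1) - Kd α t j (n - 1)))]
  rw [show Finset.Ioc (n - 1) n = {n} from by ext x; simp [Finset.mem_Ioc]; omega]
  rw [Finset.sum_singleton, Pd, if_pos rfl, show n - 1 + 1 = n from by omega]
  rw [hK1, hK2]
  have ha1 : (0:ℝ) < (t n - t (n - 1)) ^ α := Real.rpow_pos_of_pos hd1 α
  have ha2 : (0:ℝ) < (t (n - 1) - t (n - 2)) ^ α := Real.rpow_pos_of_pos hd2 α
  rw [Real.rpow_neg hd1.le, Real.rpow_neg hd2.le,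
    Real.div_rpow hd1.le hd2.le]
  field_simp
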